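/- Under the hypotheses H(Y|X)=0, I(Y;N)=0, H(X|Y,N)=0, I(X';Y)=I(X;Y), and I(X';N) ≤ ε, the augmentation X' is ε-minimal sufficient for Y among representations of X: for every random variable X̃ with I(X̃;Y)=I(X;Y) and with (Y,N) → X → X̃ a Markov chain, we have I(X'; X) ≤ I(X̃; X) + ε. -/
import Mathlib

open Real

section InfoAux
open Finset

noncomputable def mass {Ω α : Type*} [Fintype Ω] [DecidableEq α]
    (p : Ω → ℝ) (X : Ω → α) (x : α) : ℝ :=
  ∑ ω, if X ω = x then p ω else 0

noncomputable def ent {Ω α : Type*} [Fintype Ω] [Fintype α] [DecidableEq α]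
    (p : Ω → ℝ) (X : Ω → α) : ℝ :=
  ∑ x, Real.negMulLog (mass p X x)

noncomputable def condEnt {Ω α β : Type*} [Fintype Ω] [Fintype α] [Fintype β]
    [DecidableEq α] [DecidableEq β] (p : Ω → ℝ) (X : Ω → α) (Y : Ω → β) : ℝ :=
  ent p (fun ω => (X ω, Y ω)) - ent p Y

noncomputable def mi {Ω α β : Type*} [Fintype Ω] [Fintype α] [Fintype β]
    [DecidableEq α] [DecidableEq β] (p : Ω → ℝ) (X : Ω → α) (Y : Ω → β) : ℝ :=
  ent p X + ent p Y - ent p (fun ω => (X ω, Y ω))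

noncomputable def cmi {Ω α β γ : Type*} [Fintype Ω] [Fintype α] [Fintype β] [Fintype γ]
    [DecidableEq α] [DecidableEq β] [DecidableEq γ]
    (p : Ω → ℝ) (A : Ω → α) (B : Ω → β) (C : Ω → γ) : ℝ :=
  condEnt p A C - condEnt p A (fun ω => (B ω, C ω))

set_option linter.unusedSectionVars false


lemma negMulLog_sum_le {ι : Type*} (s : Finset ι) (x : ι → ℝ) (hx : ∀ i ∈ s, 0 ≤ x i) :
    Real.negMulLog (∑ i ∈ s, x i) ≤ ∑ i ∈ s, Real.negMulLog (x i) := by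
  have hrw : Real.negMulLog (∑ i ∈ s, x i) = ∑ i ∈ s, -(x i * Real.log (∑ j ∈ s, x j)) := by
    rw [Real.negMulLog, neg_mul, Finset.sum_mul]
    simp
  rw [hrw]
  refine Finset.sum_le_sum fun i hi => ?_
  rcases eq_or_lt_of_le (hx i hi) with h0 | hpos
  · simp [← h0]
  · have hle : x i ≤ ∑ j ∈ s, x j := Finset.single_le_sum hx hi
    have : Real.log (x i) ≤ Real.log (∑ j ∈ s, x j) := Real.log_le_log hpos hle
    rw [Real.negMulLog, neg_mul]
    nlinarith


lemma triple_reorder {α β γ : Type*} [Fintype α] [Fintype β] [Fintype γ]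
    (F : α → β → γ → ℝ) :
    ∑ a, ∑ b, ∑ c, F a b c = ∑ c, ∑ a, ∑ b, F a b c := by
  have h1 : ∀ a : α, ∑ b, ∑ c, F a b c = ∑ c, ∑ b, F a b c := fun a => Finset.sum_comm
  simp_rw [h1]
  exact Finset.sum_comm

lemma submod_pure {α β γ : Type*} [Fintype α] [Fintype β] [Fintype γ]
    (m : α → β → γ → ℝ) (hm : ∀ a b c, 0 ≤ m a b c) :
    (∑ a, ∑ b, ∑ c, Real.negMulLog (m a b c)) + ∑ c, Real.negMulLog (∑ a, ∑ b, m a b c)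
      ≤ (∑ a, ∑ c, Real.negMulLog (∑ b, m a b c))
        + ∑ b, ∑ c, Real.negMulLog (∑ a, m a b c) := by
  set qac : α → γ → ℝ := fun a c => ∑ b, m a b c with hqac
  set qbc : β → γ → ℝ := fun b c => ∑ a, m a b c with hqbc
  set qc : γ → ℝ := fun c => ∑ a, ∑ b, m a b c with hqc
  have hqac0 : ∀ a c, 0 ≤ qac a c := fun a c => Finset.sum_nonneg fun b _ => hm a b c
  have hqbc0 : ∀ b c, 0 ≤ qbc b c := fun b c => Finset.sum_nonneg fun a _ => hm a b c
  have hqc0 : ∀ c, 0 ≤ qc c := fun c =>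
    Finset.sum_nonneg fun a _ => Finset.sum_nonneg fun b _ => hm a b c
  set r : α → β → γ → ℝ := fun a b c =>
    if 0 < qc c then qac a c * qbc b c / qc c else 0 with hr
  have hr0 : ∀ a b c, 0 ≤ r a b c := by
    intro a b c
    rw [hr]
    dsimp only
    split
    · exact div_nonneg (mul_nonneg (hqac0 a c) (hqbc0 b c)) (hqc0 c)
    · exact le_refl 0
  -- rewrite all four terms as triple sums
  have hR1 : (∑ a, ∑ c, Real.negMulLog (qac a c))
      = ∑ a, ∑ b, ∑ c, -(m a b c * Real.log (qac a c)) := by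
    refine Finset.sum_congr rfl fun a _ => ?_
    rw [Finset.sum_comm]
    refine Finset.sum_congr rfl fun c _ => ?_
    rw [Real.negMulLog, neg_mul, hqac, Finset.sum_mul]
    simp
  have hR2 : (∑ b, ∑ c, Real.negMulLog (qbc b c))
      = ∑ a, ∑ b, ∑ c, -(m a b c * Real.log (qbc b c)) := by
    rw [triple_reorder (fun a b c => -(m a b c * Real.log (qbc b c)))]
    rw [Finset.sum_comm]
    refine Finset.sum_congr rfl fun b _ => ?_
    rw [Finset.sum_comm]
    refine Finset.sum_congr rfl fun c _ => ?_
    rw [Real.negMulLog, neg_mul, hqbc, Finset.sum_mul]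
    simp
  have hR3 : (∑ c, Real.negMulLog (qc c))
      = ∑ a, ∑ b, ∑ c, -(m a b c * Real.log (qc c)) := by
    rw [triple_reorder (fun a b c => -(m a b c * Real.log (qc c)))]
    refine Finset.sum_congr rfl fun c _ => ?_
    rw [Real.negMulLog, neg_mul, hqc, Finset.sum_mul, ← Finset.sum_neg_distrib]
    refine Finset.sum_congr rfl fun a _ => ?_
    rw [Finset.sum_mul, ← Finset.sum_neg_distrib]
  rw [hR1, hR2, hR3]
  -- pointwise inequality
  have key : ∀ a b c, Real.negMulLog (m a b c) + -(m a b c * Real.log (qc c))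
      ≤ -(m a b c * Real.log (qac a c)) + -(m a b c * Real.log (qbc b c))
        + (r a b c - m a b c) := by
    intro a b c
    rcases eq_or_lt_of_le (hm a b c) with h0 | hpos
    · rw [← h0]
      simpa [Real.negMulLog] using hr0 a b c
    · have hac : 0 < qac a c :=
        lt_of_lt_of_le hpos (Finset.single_le_sum (fun b _ => hm a b c) (Finset.mem_univ b))
      have hbc : 0 < qbc b c :=
        lt_of_lt_of_le hpos (Finset.single_le_sum (fun a _ => hm a b c) (Finset.mem_univ a))
      have hc : 0 < qc c :=
        lt_of_lt_of_le hac (Finset.single_le_sum (fun a _ => hqac0 a c) (Finset.mem_univ a))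
      have hrval : r a b c = qac a c * qbc b c / qc c := by rw [hr]; simp [hc]
      have hrpos : 0 < r a b c := by rw [hrval]; positivity
      have hlog : Real.log (r a b c / m a b c) ≤ r a b c / m a b c - 1 :=
        Real.log_le_sub_one_of_pos (by positivity)
      have hexp : Real.log (r a b c / m a b c)
          = Real.log (qac a c) + Real.log (qbc b c) - Real.log (qc c) - Real.log (m a b c) := by
        rw [Real.log_div (ne_of_gt hrpos) (ne_of_gt hpos), hrval,
          Real.log_div (by positivity) (ne_of_gt hc),
          Real.log_mul (ne_of_gt hac) (ne_of_gt hbc)]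
      have hmul : m a b c * Real.log (r a b c / m a b c)
          ≤ m a b c * (r a b c / m a b c - 1) :=
        mul_le_mul_of_nonneg_left hlog (le_of_lt hpos)
      have : m a b c * (r a b c / m a b c - 1) = r a b c - m a b c := by
        field_simp
      rw [this] at hmul
      rw [hexp] at hmul
      rw [Real.negMulLog, neg_mul]
      nlinarith
  -- sum up
  have hsum : ∑ a, ∑ b, ∑ c, (Real.negMulLog (m a b c) + -(m a b c * Real.log (qc c)))
      ≤ ∑ a, ∑ b, ∑ c, (-(m a b c * Real.log (qac a c)) + -(m a b c * Real.log (qbc b c))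
        + (r a b c - m a b c)) :=
    Finset.sum_le_sum fun a _ => Finset.sum_le_sum fun b _ =>
      Finset.sum_le_sum fun c _ => key a b c
  -- identity : ∑ r = ∑ m
  have hrsum : ∑ a, ∑ b, ∑ c, r a b c = ∑ a, ∑ b, ∑ c, m a b c := by
    rw [triple_reorder r, triple_reorder m]
    refine Finset.sum_congr rfl fun c _ => ?_
    by_cases hc : 0 < qc c
    · have : ∀ a b, r a b c = qac a c * qbc b c / qc c := by
        intro a b; rw [hr]; simp [hc]
      simp_rw [this, ← Finset.sum_div, ← Finset.mul_sum, ← Finset.sum_mul]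
      have h1 : ∑ a, qac a c = qc c := by simp only [hqac, hqc]
      have h2 : ∑ b, qbc b c = qc c := by
        simp only [hqbc, hqc]
        exact Finset.sum_comm
      rw [h1, h2, mul_div_assoc, div_self (ne_of_gt hc), mul_one, hqc]
    · have hc0 : qc c = 0 := le_antisymm (not_lt.1 hc) (hqc0 c)
      have hm0 : ∀ a b, m a b c = 0 := by
        intro a b
        have h1 : qac a c ≤ qc c := Finset.single_le_sum (fun a _ => hqac0 a c) (Finset.mem_univ a)
        have h2 : m a b c ≤ qac a c := Finset.single_le_sum (fun b _ => hm a b c) (Finset.mem_univ b)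
        have := hm a b c
        linarith
      simp [hr, hc, hm0]
  simp only [Finset.sum_add_distrib, Finset.sum_sub_distrib] at hsum
  linarith [hrsum]

variable {Ω ι κ : Type*} [Fintype Ω]

lemma mass_nonneg [DecidableEq ι] (p : Ω → ℝ) (hp : ∀ ω, 0 ≤ p ω) (T : Ω → ι) (t : ι) :
    0 ≤ mass p T t := by
  unfold mass
  exact Finset.sum_nonneg fun ω _ => by split <;> [exact hp ω; exact le_refl 0]

lemma mass_comp [Fintype ι] [DecidableEq ι] [DecidableEq κ]
    (p : Ω → ℝ) (T : Ω → ι) (f : ι → κ) (y : κ) :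
    mass p (fun ω => f (T ω)) y = ∑ t, if f t = y then mass p T t else 0 := by
  unfold mass
  have h1 : ∀ t : ι, (if f t = y then (∑ ω, if T ω = t then p ω else 0) else 0)
      = ∑ ω, if T ω = t then (if f t = y then p ω else 0) else 0 := by
    intro t
    by_cases h : f t = y <;> simp [h]
  simp_rw [h1]
  rw [Finset.sum_comm]
  refine Finset.sum_congr rfl fun ω _ => ?_
  rw [Finset.sum_ite_eq]
  simp

lemma ent_comp_le [Fintype ι] [DecidableEq ι] [Fintype κ] [DecidableEq κ]
    (p : Ω → ℝ) (hp : ∀ ω, 0 ≤ p ω) (T : Ω → ι) (f : ι → κ) :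
    ent p (fun ω => f (T ω)) ≤ ent p T := by
  unfold ent
  calc ∑ y, Real.negMulLog (mass p (fun ω => f (T ω)) y)
      = ∑ y, Real.negMulLog (∑ t, if f t = y then mass p T t else 0) := by
        simp_rw [mass_comp]
    _ ≤ ∑ y, ∑ t, Real.negMulLog (if f t = y then mass p T t else 0) := by
        refine Finset.sum_le_sum fun y _ => ?_
        refine negMulLog_sum_le _ _ fun t _ => ?_
        split <;> [exact mass_nonneg p hp T t; exact le_refl 0]
    _ = ∑ y, ∑ t, if f t = y then Real.negMulLog (mass p T t) else 0 := by
        refine Finset.sum_congr rfl fun y _ => Finset.sum_congr rfl fun t _ => ?_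
        split <;> simp
    _ = ∑ t, ∑ y, if f t = y then Real.negMulLog (mass p T t) else 0 := Finset.sum_comm
    _ = ∑ t, Real.negMulLog (mass p T t) := by
        refine Finset.sum_congr rfl fun t _ => ?_
        simp

lemma ent_comp_eq [Fintype ι] [DecidableEq ι] [Fintype κ] [DecidableEq κ] [Nonempty ι]
    (p : Ω → ℝ) (hp : ∀ ω, 0 ≤ p ω) (T : Ω → ι) (f : ι → κ) (hf : Function.Injective f) :
    ent p (fun ω => f (T ω)) = ent p T := by
  obtain ⟨g, hg⟩ := hf.hasLeftInverse
  refine le_antisymm (ent_comp_le p hp T f) ?_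
  have h1 : ent p T = ent p (fun ω => g (f (T ω))) := by
    congr 1
    funext ω
    rw [hg (T ω)]
  rw [h1]
  exact ent_comp_le p hp (fun ω => f (T ω)) g

section Marg
variable {Ω α β γ : Type*} [Fintype Ω] [Fintype α] [DecidableEq α]
  [Fintype β] [DecidableEq β] [Fintype γ] [DecidableEq γ]

lemma marg_b (p : Ω → ℝ) (A : Ω → α) (B : Ω → β) (C : Ω → γ) (a : α) (c : γ) :
    ∑ b, mass p (fun ω => (A ω, B ω, C ω)) (a, b, c) = mass p (fun ω => (A ω, C ω)) (a, c) := by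
  unfold mass
  rw [Finset.sum_comm]
  refine Finset.sum_congr rfl fun ω _ => ?_
  by_cases hA : A ω = a <;> by_cases hC : C ω = c <;> simp [hA, hC, Prod.ext_iff]

lemma marg_a (p : Ω → ℝ) (A : Ω → α) (B : Ω → β) (C : Ω → γ) (b : β) (c : γ) :
    ∑ a, mass p (fun ω => (A ω, B ω, C ω)) (a, b, c) = mass p (fun ω => (B ω, C ω)) (b, c) := by
  unfold mass
  rw [Finset.sum_comm]
  refine Finset.sum_congr rfl fun ω _ => ?_
  by_cases hB : B ω = b <;> by_cases hC : C ω = c <;> simp [hB, hC, Prod.ext_iff]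

lemma marg_fst (p : Ω → ℝ) (A : Ω → α) (C : Ω → γ) (c : γ) :
    ∑ a, mass p (fun ω => (A ω, C ω)) (a, c) = mass p C c := by
  unfold mass
  rw [Finset.sum_comm]
  refine Finset.sum_congr rfl fun ω _ => ?_
  by_cases hC : C ω = c <;> simp [hC, Prod.ext_iff]

lemma ent_pair_expand (p : Ω → ℝ) (A : Ω → α) (C : Ω → γ) :
    ent p (fun ω => (A ω, C ω)) = ∑ a, ∑ c, Real.negMulLog (mass p (fun ω => (A ω, C ω)) (a, c)) := by
  unfold ent
  rw [Fintype.sum_prod_type]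

lemma ent_triple_expand (p : Ω → ℝ) (A : Ω → α) (B : Ω → β) (C : Ω → γ) :
    ent p (fun ω => (A ω, B ω, C ω))
      = ∑ a, ∑ b, ∑ c, Real.negMulLog (mass p (fun ω => (A ω, B ω, C ω)) (a, b, c)) := by
  unfold ent
  rw [Fintype.sum_prod_type]
  refine Finset.sum_congr rfl fun a _ => ?_
  rw [Fintype.sum_prod_type]

lemma ent_submod (p : Ω → ℝ) (hp : ∀ ω, 0 ≤ p ω) (A : Ω → α) (B : Ω → β) (C : Ω → γ) :
    ent p (fun ω => (A ω, B ω, C ω)) + ent p C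
      ≤ ent p (fun ω => (A ω, C ω)) + ent p (fun ω => (B ω, C ω)) := by
  have h := submod_pure (fun a b c => mass p (fun ω => (A ω, B ω, C ω)) (a, b, c))
    (fun a b c => mass_nonneg p hp _ _)
  rw [ent_triple_expand, ent_pair_expand p A C, ent_pair_expand p B C]
  have hC : ent p C = ∑ c, Real.negMulLog (∑ a, ∑ b, mass p (fun ω => (A ω, B ω, C ω)) (a, b, c)) := by
    unfold ent
    refine Finset.sum_congr rfl fun c _ => ?_
    congr 1
    rw [← marg_fst p A C c]
    exact Finset.sum_congr rfl fun a _ => (marg_b p A B C a c).symm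
  rw [hC]
  simp_rw [← marg_b p A B C, ← marg_a p A B C]
  exact h
end Marg

end InfoAux

theorem stmt_8 {Ω α α' β γ δ : Type*} [Fintype Ω] [Fintype α] [DecidableEq α]
    [Fintype α'] [DecidableEq α'] [Fintype β] [DecidableEq β] [Fintype γ] [DecidableEq γ]
    [Fintype δ] [DecidableEq δ]
    (p : Ω → ℝ) (hp : ∀ ω, 0 ≤ p ω) (hsum : ∑ ω, p ω = 1)
    (X : Ω → α) (X' : Ω → α') (Y : Ω → β) (N : Ω → γ) (ε : ℝ) (hε : 0 ≤ ε)
    (hYX : condEnt p Y X = 0)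
    (hYN : mi p Y N = 0)
    (hXdet : condEnt p X (fun ω => (Y ω, N ω)) = 0)
    (hsuff : mi p X' Y = mi p X Y)
    (hmin : mi p X' N ≤ ε) :
    ∀ Xt : Ω → δ, mi p Xt Y = mi p X Y →
      cmi p (fun ω => (Y ω, N ω)) Xt X = 0 →
      mi p X' X ≤ mi p Xt X + ε := by
  intro Xt hXtY _
  have hΩ : Nonempty Ω := by
    by_contra h
    rw [not_nonempty_iff] at h
    rw [Finset.univ_eq_empty, Finset.sum_empty] at hsum
    exact absurd hsum (by norm_num)
  obtain ⟨ω₀⟩ := hΩ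
  -- ent (X,Y) = ent X
  have hswap1 : ent p (fun ω => (X ω, Y ω)) = ent p (fun ω => (Y ω, X ω)) := by
    have : Nonempty (β × α) := ⟨(Y ω₀, X ω₀)⟩
    exact ent_comp_eq p hp (fun ω => (Y ω, X ω)) Prod.swap Prod.swap_injective
  have hYXe : ent p (fun ω => (Y ω, X ω)) = ent p X := by
    unfold condEnt at hYX; linarith
  have hXYe : ent p (fun ω => (X ω, Y ω)) = ent p X := hswap1.trans hYXe
  have hmiXY : mi p X Y = ent p Y := by unfold mi; rw [hXYe]; ring
  -- Claim B : ent Y ≤ mi Xt X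
  have hXtYe : ent p Xt + ent p Y - ent p (fun ω => (Xt ω, Y ω)) = ent p Y := by
    rw [hmiXY] at hXtY; unfold mi at hXtY; linarith
  have hsubB := ent_submod p hp Xt X Y
  have hmonoB : ent p (fun ω => (Xt ω, X ω)) ≤ ent p (fun ω => (Xt ω, X ω, Y ω)) :=
    ent_comp_le p hp (fun ω => (Xt ω, X ω, Y ω)) (fun t => (t.1, t.2.1))
  have hB : ent p Y ≤ mi p Xt X := by
    unfold mi; linarith
  -- Claim A : mi X' X ≤ ε + ent Y
  have hswap2 : ent p (fun ω => (X ω, (Y ω, N ω))) = ent p (fun ω => ((Y ω, N ω), X ω)) := by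
    have : Nonempty ((β × γ) × α) := ⟨((Y ω₀, N ω₀), X ω₀)⟩
    exact ent_comp_eq p hp (fun ω => ((Y ω, N ω), X ω)) Prod.swap Prod.swap_injective
  have hXdet' : ent p (fun ω => (X ω, (Y ω, N ω))) = ent p (fun ω => (Y ω, N ω)) := by
    unfold condEnt at hXdet; linarith
  have hYNe : ent p (fun ω => (Y ω, N ω)) = ent p Y + ent p N := by
    unfold mi at hYN; linarith
  have hsubA := ent_submod p hp X' (fun ω => (Y ω, N ω)) X
  have hmonoA : ent p (fun ω => (X' ω, N ω)) ≤ ent p (fun ω => (X' ω, (Y ω, N ω), X ω)) :=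
    ent_comp_le p hp (fun ω => (X' ω, (Y ω, N ω), X ω)) (fun t => (t.1, t.2.1.2))
  have hmin' : ent p X' + ent p N - ent p (fun ω => (X' ω, N ω)) ≤ ε := by
    unfold mi at hmin; linarith
  have hA : mi p X' X ≤ ε + ent p Y := by
    unfold mi; linarith
  linarith
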